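/- No nilpotent group can act faithfully and doubly transitively on a set X with more than two elements. -/

import Mathlib

lemma center_ne_bot_of_nilpotent {G : Type*} [Group G] [Nontrivial G]
    (hnil : Group.IsNilpotent G) : Subgroup.center G ≠ ⊥ := by
  intro hc
  have key : ∀ n, Subgroup.upperCentralSeries G n = ⊥ := by
    intro n
    induction n with
    | zero => exact upperCentralSeries_zero G
    | succ n ih =>
      ext x
      simp only [Subgroup.mem_bot]
      constructor
      · intro hx
        have : x ∈ Subgroup.center G := by
          rw [Subgroup.mem_center_iff]
          intro y
          have := (mem_upperCentralSeries_succ_iff).mp hx y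
          rw [ih, Subgroup.mem_bot] at this
          have : x * y * x⁻¹ = y := by
            have h := mul_eq_one_iff_eq_inv.mp this
            rw [h]; simp
          calc y * x = (x * y * x⁻¹) * x := by rw [this]
            _ = x * y := by group
        rw [hc, Subgroup.mem_bot] at this
        exact this
      · rintro rfl; exact Subgroup.one_mem _
  obtain ⟨n, hn⟩ := hnil.nilpotent
  rw [key n] at hn
  exact bot_ne_top hn

/-- No nilpotent group acts faithfully and doubly transitively on a set with more
than two elements. -/
theorem stmt_3 {G X : Type*} [Group G] [MulAction G X] [FaithfulSMul G X]
    (hnil : Group.IsNilpotent G)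
    (hdt : ∀ x₁ x₂ y₁ y₂ : X, x₁ ≠ x₂ → y₁ ≠ y₂ → ∃ g : G, g • x₁ = y₁ ∧ g • x₂ = y₂)
    (hcard : ∃ a b c : X, a ≠ b ∧ a ≠ c ∧ b ≠ c) :
    False := by
  obtain ⟨a, b, c, hab, hac, hbc⟩ := hcard
  -- G is nontrivial
  obtain ⟨g₀, hg₀a, hg₀b⟩ := hdt a b a c hab hac
  have hGnt : Nontrivial G := by
    refine ⟨g₀, 1, fun h => ?_⟩
    rw [h, one_smul] at hg₀b
    exact hbc hg₀b
  -- get a nontrivial central element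
  have hcen := center_ne_bot_of_nilpotent hnil
  rw [← Subgroup.nontrivial_iff_ne_bot] at hcen
  obtain ⟨⟨z, hz⟩, hz1⟩ := exists_ne (1 : Subgroup.center G)
  have hzne : z ≠ 1 := fun h => hz1 (Subtype.ext h)
  -- z moves some point
  have : ∃ p : X, z • p ≠ p := by
    by_contra h
    push_neg at h
    exact hzne (eq_of_smul_eq_smul (fun p : X => by rw [h p, one_smul]))
  obtain ⟨p, hp⟩ := this
  set q := z • p with hq
  -- find r distinct from p and q
  have : ∃ r : X, r ≠ p ∧ r ≠ q := by
    by_cases h1 : a ≠ p ∧ a ≠ q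
    · exact ⟨a, h1⟩
    by_cases h2 : b ≠ p ∧ b ≠ q
    · exact ⟨b, h2⟩
    by_cases h3 : c ≠ p ∧ c ≠ q
    · exact ⟨c, h3⟩
    push_neg at h1 h2 h3
    -- each of a, b, c is p or q; three distinct can't fit into {p,q}... derive contradiction
    exfalso
    have hpq : p ≠ q := Ne.symm hp
    rcases eq_or_ne a p with ha | ha
    · rcases eq_or_ne b p with hb | hb
      · exact hab (ha.trans hb.symm)
      · have hbq := h2 hb
        rcases eq_or_ne c p with hcp | hcp
        · exact hac (ha.trans hcp.symm)
        · exact hbc (hbq.trans (h3 hcp).symm)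
    · have haq := h1 ha
      rcases eq_or_ne b q with hb | hb
      · exact hab (haq.trans hb.symm)
      · have hbp : b = p := by
          rcases eq_or_ne b p with h | h
          · exact h
          · exact absurd (h2 h) hb
        rcases eq_or_ne c q with hcq | hcq
        · exact hac (haq.trans hcq.symm)
        · have hcp : c = p := by
            rcases eq_or_ne c p with h | h
            · exact h
            · exact absurd (h3 h) hcq
          exact hbc (hbp.trans hcp.symm)
  obtain ⟨r, hrp, hrq⟩ := this
  -- double transitivity: g fixing p, sending q to r
  obtain ⟨g, hgp, hgq⟩ := hdt p q p r (Ne.symm hp) (Ne.symm hrp)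
  -- z central: z • (g • p) = g • (z • p)
  have hcomm : z * g = g * z := ((Subgroup.mem_center_iff.mp hz) g).symm
  have : z • (g • p) = g • (z • p) := by
    rw [← mul_smul, ← mul_smul, hcomm]
  rw [hgp, ← hq, hgq] at this
  exact hrq this.symm
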